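/- Let (E,w) be a row-finite weighted graph that does not satisfy Condition (LPA), with any fixed choice of special edges. Then there exist a weighted edge e ∈ E¹_w and a nod-path whose first letter is e_2 and whose last letter is e_2*. -/

import Mathlib

open FreeAlgebra
open scoped Classical

/-- A row-finite weighted graph: a directed graph with source `s`, range `r` and
a weight map `w : E¹ → {1,2,3,…}`, such that every vertex emits finitely many edges. -/
structure WGraph : Type 1 where
  V : Type
  E : Type
  s : E → V
  r : E → V
  w : E → ℕ
  w_pos : ∀ e, 0 < w e
  rowFinite : ∀ v, {e | s e = v}.Finite

namespace WGraph

variable (G : WGraph)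

/-- The weight of a vertex: `w(v) = max {w(e) : e ∈ s⁻¹(v)}` (with `max ∅ = 0`). -/
noncomputable def vw (v : G.V) : ℕ := (G.rowFinite v).toFinset.sup G.w

/-- One-step reachability: there is an edge from `u` to `v`. -/
def Adj (u v : G.V) : Prop := ∃ e, G.s e = u ∧ G.r e = v

/-- `u ≥ v`: there is a (possibly empty) path from `u` to `v`. -/
def Geq (u v : G.V) : Prop := Relation.ReflTransGen G.Adj u v

/-- An edge is weighted if its weight is `> 1`. -/
def Weighted (e : G.E) : Prop := 1 < G.w e

/-- Two edges are in line. -/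
def InLine (e f : G.E) : Prop := e = f ∨ G.Geq (G.r e) (G.s f) ∨ G.Geq (G.r f) (G.s e)

/-- `c` is a cycle based at `v`. -/
def IsCycleAt (c : List G.E) (v : G.V) : Prop :=
  ∃ h : c ≠ [], c.Chain' (fun a b => G.r a = G.s b) ∧ G.s (c.head h) = v ∧
    G.r (c.getLast h) = v ∧ (c.map G.s).Nodup

/-- Condition (LPA). -/
def LPA : Prop :=
  (∀ e f, G.Weighted e → G.Weighted f → G.s e = G.s f → e = f) ∧
  (∀ v, (∃ g, G.Weighted g ∧ G.Geq (G.r g) v) → ∀ e f, G.s e = v → G.s f = v → e = f) ∧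
  (∀ e f, G.Weighted e → G.Weighted f → ¬ G.InLine e f →
    ∀ v, ¬ (G.Geq (G.r e) v ∧ G.Geq (G.r f) v)) ∧
  (∀ e, G.Weighted e → ∀ v, G.Geq (G.r e) v → ∀ c, G.IsCycleAt c v → e ∈ c)

end WGraph

/-- The generators `v`, `e_i`, `e_i*` (for `1 ≤ i ≤ w(e)`) of the weighted
Leavitt path algebra. -/
inductive WGen (G : WGraph) : Type
  | vtx (v : G.V)
  | edge (e : G.E) (i : ℕ) (h1 : 1 ≤ i) (h2 : i ≤ G.w e)
  | ghost (e : G.E) (i : ℕ) (h1 : 1 ≤ i) (h2 : i ≤ G.w e)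

variable (G : WGraph) (K : Type) [Field K]

/-- The generator `v` in the free algebra. -/
def fvtx (v : G.V) : FreeAlgebra K (WGen G) := ι K (WGen.vtx v)

/-- The generator `e_i` in the free algebra, read as `0` when `i > w(e)`. -/
noncomputable def fedge (e : G.E) (i : ℕ) : FreeAlgebra K (WGen G) :=
  if h : 1 ≤ i ∧ i ≤ G.w e then ι K (WGen.edge e i h.1 h.2) else 0

/-- The generator `e_i*` in the free algebra, read as `0` when `i > w(e)`. -/
noncomputable def fghost (e : G.E) (i : ℕ) : FreeAlgebra K (WGen G) :=
  if h : 1 ≤ i ∧ i ≤ G.w e then ι K (WGen.ghost e i h.1 h.2) else 0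

/-- The defining relations of the weighted Leavitt path algebra. -/
inductive WRel : FreeAlgebra K (WGen G) → FreeAlgebra K (WGen G) → Prop
  | vtxMul (u v : G.V) :
      WRel (fvtx G K u * fvtx G K v) (if u = v then fvtx G K u else 0)
  | srcEdge (e : G.E) (i : ℕ) :
      WRel (fvtx G K (G.s e) * fedge G K e i) (fedge G K e i)
  | edgeRng (e : G.E) (i : ℕ) :
      WRel (fedge G K e i * fvtx G K (G.r e)) (fedge G K e i)
  | rngGhost (e : G.E) (i : ℕ) :
      WRel (fvtx G K (G.r e) * fghost G K e i) (fghost G K e i)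
  | ghostSrc (e : G.E) (i : ℕ) :
      WRel (fghost G K e i * fvtx G K (G.s e)) (fghost G K e i)
  | ck1 (v : G.V) (e f : G.E) (he : G.s e = v) (hf : G.s f = v) :
      WRel (∑ i ∈ Finset.Icc 1 (G.vw v), fghost G K e i * fedge G K f i)
           (if e = f then fvtx G K (G.r e) else 0)
  | ck2 (v : G.V) (i j : ℕ) (hi1 : 1 ≤ i) (hi2 : i ≤ G.vw v) (hj1 : 1 ≤ j) (hj2 : j ≤ G.vw v) :
      WRel (∑ e ∈ (G.rowFinite v).toFinset, fedge G K e i * fghost G K e j)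
           (if i = j then fvtx G K v else 0)

/-- The weighted Leavitt path algebra `L_K(E,w)`, presented by generators and relations. -/
abbrev WLPA : Type := RingQuot (WRel G K)

/-- The canonical quotient map from the free algebra to `L_K(E,w)`. -/
noncomputable def wmk : FreeAlgebra K (WGen G) →ₐ[K] WLPA G K :=
  RingQuot.mkAlgHom K (WRel G K)

/-- The image of a generator in `L_K(E,w)`. -/
noncomputable def gen (x : WGen G) : WLPA G K := wmk G K (ι K x)

/-- The image in `L_K(E,w)` of a word over the generating set. -/
noncomputable def wordElem (xs : List (WGen G)) : WLPA G K := (xs.map (gen G K)).prod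

/-- Source of a letter (with the usual conventions). -/
def gsrc : WGen G → G.V
  | .vtx v => v
  | .edge e _ _ _ => G.s e
  | .ghost e _ _ _ => G.r e

/-- Range of a letter (with the usual conventions). -/
def grng : WGen G → G.V
  | .vtx v => v
  | .edge e _ _ _ => G.r e
  | .ghost e _ _ _ => G.s e

/-- Whether a letter is a vertex letter. -/
def IsVertexLetter : WGen G → Prop
  | .vtx _ => True
  | _ => False

/-- A d-path: a nonempty word which is either a single vertex letter, or consists of
non-vertex letters with matching ranges and sources. -/
def IsDPath (xs : List (WGen G)) : Prop :=
  (∃ v, xs = [WGen.vtx v]) ∨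
  (xs ≠ [] ∧ (∀ x ∈ xs, ¬ IsVertexLetter G x) ∧ xs.Chain' (fun a b => grng G a = gsrc G b))

/-- `sp` is a choice of special edges: for every non-sink `v`, `sp v ∈ s⁻¹(v)`
and `w(sp v) = w(v)`. -/
def IsSpecialChoice (sp : G.V → G.E) : Prop :=
  ∀ v : G.V, (∃ e, G.s e = v) → G.s (sp v) = v ∧ G.w (sp v) = G.vw v

/-- The forbidden two-letter words: `(e^v)_i ((e^v)_j)*` for a special edge `e^v`, and
`e_1* f_1` for arbitrary edges `e, f`. -/
def Forbidden (sp : G.V → G.E) : WGen G → WGen G → Prop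
  | WGen.edge e _ _ _, WGen.ghost f _ _ _ => e = f ∧ sp (G.s e) = e
  | WGen.ghost _ i _ _, WGen.edge _ j _ _ => i = 1 ∧ j = 1
  | _, _ => False

/-- A nod-path: a d-path none of whose subwords is forbidden. -/
def IsNod (sp : G.V → G.E) (xs : List (WGen G)) : Prop :=
  IsDPath G xs ∧ xs.Chain' (fun a b => ¬ Forbidden G sp a b)

/-- The degree of a letter in `⊕_{i∈ℕ} ℤ`. -/
noncomputable def gdeg : WGen G → (ℕ →₀ ℤ)
  | .vtx _ => 0
  | .edge _ i _ _ => Finsupp.single i 1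
  | .ghost _ i _ _ => - Finsupp.single i 1

/-- The homogeneous component of degree `d` of `L_K(E,w)` with respect to the
canonical grading: the span of the images of all words of degree `d`. -/
noncomputable def homComp (d : ℕ →₀ ℤ) : Submodule K (WLPA G K) :=
  Submodule.span K {x | ∃ xs : List (WGen G), (xs.map (gdeg G)).sum = d ∧ x = wordElem G K xs}

/-- `V^(m)`: the span of all products of at most `m` elements of `V`. -/
def pileSpan (K A : Type) [Field K] [Ring A] [Algebra K A] (V : Set A) (m : ℕ) :
    Submodule K A :=
  Submodule.span K {x | ∃ l : List A, l ≠ [] ∧ l.length ≤ m ∧ (∀ a ∈ l, a ∈ V) ∧ x = l.prod}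


section Stmt5Aux

/-! ### Auxiliary machinery for Statement 5 -/

/-- The letter `e_1` (always valid since weights are positive). -/
def wE1 (G : WGraph) (a : G.E) : WGen G := WGen.edge a 1 le_rfl (G.w_pos a)

/-- The letter `e_1*`. -/
def wG1 (G : WGraph) (a : G.E) : WGen G := WGen.ghost a 1 le_rfl (G.w_pos a)

@[simp] lemma grng_edge (G : WGraph) (e : G.E) (i h1 h2) :
    grng G (WGen.edge e i h1 h2) = G.r e := rfl
@[simp] lemma grng_ghost (G : WGraph) (e : G.E) (i h1 h2) :
    grng G (WGen.ghost e i h1 h2) = G.s e := rfl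
@[simp] lemma gsrc_edge (G : WGraph) (e : G.E) (i h1 h2) :
    gsrc G (WGen.edge e i h1 h2) = G.s e := rfl
@[simp] lemma gsrc_ghost (G : WGraph) (e : G.E) (i h1 h2) :
    gsrc G (WGen.ghost e i h1 h2) = G.r e := rfl
@[simp] lemma grng_wE1 (G : WGraph) (a : G.E) : grng G (wE1 G a) = G.r a := rfl
@[simp] lemma gsrc_wE1 (G : WGraph) (a : G.E) : gsrc G (wE1 G a) = G.s a := rfl
@[simp] lemma grng_wG1 (G : WGraph) (a : G.E) : grng G (wG1 G a) = G.s a := rfl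
@[simp] lemma gsrc_wG1 (G : WGraph) (a : G.E) : gsrc G (wG1 G a) = G.r a := rfl

@[simp] lemma forb_ee (G : WGraph) (sp : G.V → G.E) (e f : G.E) (i j h1 h2 h3 h4) :
    Forbidden G sp (WGen.edge e i h1 h2) (WGen.edge f j h3 h4) = False := rfl
@[simp] lemma forb_gg (G : WGraph) (sp : G.V → G.E) (e f : G.E) (i j h1 h2 h3 h4) :
    Forbidden G sp (WGen.ghost e i h1 h2) (WGen.ghost f j h3 h4) = False := rfl
@[simp] lemma forb_eg (G : WGraph) (sp : G.V → G.E) (e f : G.E) (i j h1 h2 h3 h4) :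
    Forbidden G sp (WGen.edge e i h1 h2) (WGen.ghost f j h3 h4) = (e = f ∧ sp (G.s e) = e) := rfl
@[simp] lemma forb_ge (G : WGraph) (sp : G.V → G.E) (e f : G.E) (i j h1 h2 h3 h4) :
    Forbidden G sp (WGen.ghost e i h1 h2) (WGen.edge f j h3 h4) = (i = 1 ∧ j = 1) := rfl

@[simp] lemma ivl_edge (G : WGraph) (e : G.E) (i h1 h2) :
    IsVertexLetter G (WGen.edge e i h1 h2) = False := rfl
@[simp] lemma ivl_ghost (G : WGraph) (e : G.E) (i h1 h2) :
    IsVertexLetter G (WGen.ghost e i h1 h2) = False := rfl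

@[simp] lemma grng_edge2 (G : WGraph) (e : G.E) (he : G.Weighted e) :
    grng G (WGen.edge e 2 one_le_two he) = G.r e := rfl
@[simp] lemma grng_ghost2 (G : WGraph) (e : G.E) (he : G.Weighted e) :
    grng G (WGen.ghost e 2 one_le_two he) = G.s e := rfl
@[simp] lemma gsrc_edge2 (G : WGraph) (e : G.E) (he : G.Weighted e) :
    gsrc G (WGen.edge e 2 one_le_two he) = G.s e := rfl
@[simp] lemma gsrc_ghost2 (G : WGraph) (e : G.E) (he : G.Weighted e) :
    gsrc G (WGen.ghost e 2 one_le_two he) = G.r e := rfl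
@[simp] lemma ivl_edge2 (G : WGraph) (e : G.E) (he : G.Weighted e) :
    IsVertexLetter G (WGen.edge e 2 one_le_two he) = False := rfl
@[simp] lemma ivl_ghost2 (G : WGraph) (e : G.E) (he : G.Weighted e) :
    IsVertexLetter G (WGen.ghost e 2 one_le_two he) = False := rfl
@[simp] lemma forb_wee (G : WGraph) (sp : G.V → G.E) (e f : G.E) (he : G.Weighted e) (j h3 h4) :
    Forbidden G sp (WGen.edge e 2 one_le_two he) (WGen.edge f j h3 h4) = False := rfl
@[simp] lemma forb_weg (G : WGraph) (sp : G.V → G.E) (e f : G.E) (he : G.Weighted e) (j h3 h4) :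
    Forbidden G sp (WGen.edge e 2 one_le_two he) (WGen.ghost f j h3 h4) = (e = f ∧ sp (G.s e) = e) := rfl
@[simp] lemma forb_wge (G : WGraph) (sp : G.V → G.E) (e f : G.E) (he : G.Weighted e) (j h3 h4) :
    Forbidden G sp (WGen.ghost e 2 one_le_two he) (WGen.edge f j h3 h4) = (2 = 1 ∧ j = 1) := rfl
@[simp] lemma forb_wgg (G : WGraph) (sp : G.V → G.E) (e f : G.E) (he : G.Weighted e) (j h3 h4) :
    Forbidden G sp (WGen.ghost e 2 one_le_two he) (WGen.ghost f j h3 h4) = False := rfl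
@[simp] lemma forb_eew (G : WGraph) (sp : G.V → G.E) (e f : G.E) (i h1 h2) (hf : G.Weighted f) :
    Forbidden G sp (WGen.edge e i h1 h2) (WGen.edge f 2 one_le_two hf) = False := rfl
@[simp] lemma forb_egw (G : WGraph) (sp : G.V → G.E) (e f : G.E) (i h1 h2) (hf : G.Weighted f) :
    Forbidden G sp (WGen.edge e i h1 h2) (WGen.ghost f 2 one_le_two hf) = (e = f ∧ sp (G.s e) = e) := rfl
@[simp] lemma forb_gew (G : WGraph) (sp : G.V → G.E) (e f : G.E) (i h1 h2) (hf : G.Weighted f) :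
    Forbidden G sp (WGen.ghost e i h1 h2) (WGen.edge f 2 one_le_two hf) = (i = 1 ∧ 2 = 1) := rfl
@[simp] lemma forb_ggw (G : WGraph) (sp : G.V → G.E) (e f : G.E) (i h1 h2) (hf : G.Weighted f) :
    Forbidden G sp (WGen.ghost e i h1 h2) (WGen.ghost f 2 one_le_two hf) = False := rfl
@[simp] lemma forb_weew (G : WGraph) (sp : G.V → G.E) (e f : G.E) (he : G.Weighted e) (hf : G.Weighted f) :
    Forbidden G sp (WGen.edge e 2 one_le_two he) (WGen.edge f 2 one_le_two hf) = False := rfl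
@[simp] lemma forb_wegw (G : WGraph) (sp : G.V → G.E) (e f : G.E) (he : G.Weighted e) (hf : G.Weighted f) :
    Forbidden G sp (WGen.edge e 2 one_le_two he) (WGen.ghost f 2 one_le_two hf) = (e = f ∧ sp (G.s e) = e) := rfl
@[simp] lemma forb_wgew (G : WGraph) (sp : G.V → G.E) (e f : G.E) (he : G.Weighted e) (hf : G.Weighted f) :
    Forbidden G sp (WGen.ghost e 2 one_le_two he) (WGen.edge f 2 one_le_two hf) = (2 = 1 ∧ 2 = 1) := rfl
@[simp] lemma forb_wggw (G : WGraph) (sp : G.V → G.E) (e f : G.E) (he : G.Weighted e) (hf : G.Weighted f) :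
    Forbidden G sp (WGen.ghost e 2 one_le_two he) (WGen.ghost f 2 one_le_two hf) = False := rfl

lemma chain'_univ {α : Type*} {R : α → α → Prop} (h : ∀ a b, R a b) :
    ∀ l : List α, l.Chain' R
  | [] => List.isChain_nil
  | [_] => List.isChain_singleton _
  | a :: b :: l => (List.isChain_cons_cons).mpr ⟨h a b, chain'_univ h (b :: l)⟩

/-- Concrete paths in the graph. -/
inductive GPath (G : WGraph) : G.V → G.V → List G.E → Prop
  | nil (v : G.V) : GPath G v v []
  | cons (e : G.E) {v : G.V} {l : List G.E} (h : GPath G (G.r e) v l) :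
      GPath G (G.s e) v (e :: l)

lemma geq_gpath {G : WGraph} {u v : G.V} (h : G.Geq u v) : ∃ l, GPath G u v l := by
  induction h using Relation.ReflTransGen.head_induction_on with
  | refl => exact ⟨[], GPath.nil v⟩
  | head hadj _ ih =>
    obtain ⟨l, hl⟩ := ih
    obtain ⟨e, he1, he2⟩ := hadj
    subst he1; subst he2
    exact ⟨e :: l, GPath.cons e hl⟩

lemma GPath.nil_eq {G : WGraph} {u v : G.V} (h : GPath G u v []) : u = v := by
  cases h; rfl

lemma GPath.head?_src {G : WGraph} {u v : G.V} {l : List G.E} (h : GPath G u v l) :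
    ∀ a ∈ l.head?, G.s a = u := by
  cases h with
  | nil => simp
  | cons e h' => simp

lemma GPath.chain' {G : WGraph} {u v : G.V} {l : List G.E} (h : GPath G u v l) :
    l.Chain' (fun a b => G.r a = G.s b) := by
  induction h with
  | nil => exact List.isChain_nil
  | cons e h ih =>
    exact List.isChain_cons.mpr ⟨fun b hb => (h.head?_src b hb).symm, ih⟩

lemma GPath.getLast?_rng {G : WGraph} {u v : G.V} {l : List G.E} (h : GPath G u v l) :
    ∀ a ∈ l.getLast?, G.r a = v := by
  induction h with
  | nil => simp
  | @cons e v' l' h ih =>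
    intro a ha
    rcases l' with _ | ⟨b, l''⟩
    · simp at ha; subst ha; exact h.nil_eq
    · rw [List.getLast?_cons_cons] at ha; exact ih a ha

lemma GPath.mem_geq {G : WGraph} {u v : G.V} {l : List G.E} (h : GPath G u v l) :
    ∀ a ∈ l, G.Geq u (G.s a) := by
  induction h with
  | nil => simp
  | cons e h ih =>
    intro a ha
    rcases List.mem_cons.mp ha with rfl | ha
    · exact Relation.ReflTransGen.refl
    · exact Relation.ReflTransGen.head ⟨e, rfl, rfl⟩ (ih a ha)

lemma GPath.concat_inv {G : WGraph} {u v : G.V} {l : List G.E} {a : G.E}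
    (h : GPath G u v (l ++ [a])) : GPath G u (G.s a) l ∧ G.r a = v := by
  induction l generalizing u with
  | nil =>
    simp at h
    cases h with
    | cons _ h' => exact ⟨GPath.nil _, h'.nil_eq⟩
  | cons b l ih =>
    cases h with
    | cons _ h' =>
      obtain ⟨hp, hr⟩ := ih h'
      exact ⟨GPath.cons b hp, hr⟩


/-- A cycle (no simplicity required) based at `v`, in `head?`/`getLast?` form. -/
def GCyc (G : WGraph) (c : List G.E) (v : G.V) : Prop :=
  c ≠ [] ∧ c.Chain' (fun a b => G.r a = G.s b) ∧
    (∀ a ∈ c.head?, G.s a = v) ∧ (∀ a ∈ c.getLast?, G.r a = v)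

lemma GCyc.of_isCycleAt {G : WGraph} {c : List G.E} {v : G.V}
    (h : G.IsCycleAt c v) : GCyc G c v := by
  obtain ⟨hne, hch, hhd, hlast, -⟩ := h
  refine ⟨hne, hch, fun a ha => ?_, fun a ha => ?_⟩
  · rw [List.head?_eq_head hne] at ha
    rw [Option.mem_def, Option.some.injEq] at ha
    exact ha ▸ hhd
  · rw [List.getLast?_eq_getLast hne] at ha
    rw [Option.mem_def, Option.some.injEq] at ha
    exact ha ▸ hlast

lemma GCyc.rotate {G : WGraph} {c₀ : List G.E} {cm : G.E} {v : G.V}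
    (h : GCyc G (c₀ ++ [cm]) v) : GCyc G (cm :: c₀) (G.s cm) := by
  obtain ⟨-, hch, hhd, hlast⟩ := h
  have hr : G.r cm = v := hlast cm (by simp [List.getLast?_concat])
  obtain ⟨h1, -, h3⟩ := List.isChain_append.mp hch
  refine ⟨List.cons_ne_nil _ _, ?_, ?_, ?_⟩
  · refine List.isChain_cons.mpr ⟨fun y hy => ?_, h1⟩
    have : G.s y = v := hhd y (by rw [List.head?_append, hy]; rfl)
    rw [hr, this]
  · simp
  · rcases c₀ with _ | ⟨b, c₁⟩
    · intro a ha
      simp at ha; subst ha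
      rw [hr, hhd cm (by simp)]
    · intro a ha
      rw [List.getLast?_cons_cons] at ha
      exact h3 a ha cm (by simp)

/-- Truncation for case (LPA3): arrange that the two paths do not share last edge. -/
lemma trunc3 {G : WGraph} {u1 u2 : G.V} :
    ∀ (n : ℕ) (α β : List G.E) (v : G.V), α.length ≤ n →
    GPath G u1 v α → GPath G u2 v β →
    ∃ v' α' β', GPath G u1 v' α' ∧ GPath G u2 v' β' ∧
      ∀ a ∈ α'.getLast?, ∀ b ∈ β'.getLast?, a ≠ b := by
  intro n
  induction n with
  | zero =>
    intro α β v hlen hα hβ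
    have : α = [] := List.eq_nil_of_length_eq_zero (Nat.le_zero.mp hlen)
    subst this
    exact ⟨v, [], β, hα, hβ, by simp⟩
  | succ n ih =>
    intro α β v hlen hα hβ
    rcases α.eq_nil_or_concat with rfl | ⟨α₀, a, rfl⟩
    · exact ⟨v, [], β, hα, hβ, by simp⟩
    rcases β.eq_nil_or_concat with rfl | ⟨β₀, b, rfl⟩
    · exact ⟨v, _, [], hα, hβ, by simp⟩
    simp only [List.concat_eq_append] at *
    by_cases hab : a = b
    · subst hab
      obtain ⟨hα', -⟩ := hα.concat_inv
      obtain ⟨hβ', -⟩ := hβ.concat_inv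
      exact ih α₀ β₀ (G.s a) (by simp at hlen; omega) hα' hβ'
    · refine ⟨v, _, _, hα, hβ, ?_⟩
      simp only [List.getLast?_concat, Option.mem_def, Option.some.injEq]
      rintro x rfl y rfl; exact hab

/-- Truncation for case (LPA4): arrange that the path and the cycle do not share last edge. -/
lemma trunc4 {G : WGraph} {u : G.V} {e : G.E} :
    ∀ (n : ℕ) (α c : List G.E) (v : G.V), α.length ≤ n →
    GPath G u v α → GCyc G c v → e ∉ c →
    ∃ v' α' c', GPath G u v' α' ∧ GCyc G c' v' ∧ e ∉ c' ∧
      ∀ a ∈ α'.getLast?, ∀ b ∈ c'.getLast?, a ≠ b := by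
  intro n
  induction n with
  | zero =>
    intro α c v hlen hα hc hec
    have : α = [] := List.eq_nil_of_length_eq_zero (Nat.le_zero.mp hlen)
    subst this
    exact ⟨v, [], c, hα, hc, hec, by simp⟩
  | succ n ih =>
    intro α c v hlen hα hc hec
    rcases α.eq_nil_or_concat with rfl | ⟨α₀, a, rfl⟩
    · exact ⟨v, [], c, hα, hc, hec, by simp⟩
    rcases c.eq_nil_or_concat with rfl | ⟨c₀, cm, rfl⟩
    · exact absurd rfl hc.1
    simp only [List.concat_eq_append] at *
    by_cases hab : a = cm
    · subst hab
      obtain ⟨hα', -⟩ := hα.concat_inv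
      have hc' : GCyc G (a :: c₀) (G.s a) := hc.rotate
      have hec' : e ∉ a :: c₀ := by
        intro hm
        rcases List.mem_cons.mp hm with rfl | hm'
        · exact hec (List.mem_append.mpr (Or.inr (by simp)))
        · exact hec (List.mem_append.mpr (Or.inl hm'))
      exact ih α₀ (a :: c₀) (G.s a) (by simp at hlen; omega) hα' hc' hec'
    · refine ⟨v, _, _, hα, hc, hec, ?_⟩
      simp only [List.getLast?_concat, Option.mem_def, Option.some.injEq]
      rintro x rfl y rfl; exact hab


lemma chainD_map_e1 {G : WGraph} {l : List G.E}
    (h : l.Chain' (fun a b => G.r a = G.s b)) :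
    (l.map (wE1 G)).Chain' (fun a b => grng G a = gsrc G b) := by
  rw [List.Chain', List.isChain_map]; exact h

lemma chainD_map_g1rev {G : WGraph} {l : List G.E}
    (h : l.Chain' (fun a b => G.r a = G.s b)) :
    (l.reverse.map (wG1 G)).Chain' (fun a b => grng G a = gsrc G b) := by
  rw [List.Chain', List.isChain_map, List.isChain_reverse]
  exact List.IsChain.imp (fun a b hab => hab.symm) h

lemma chainN_map_e1 (G : WGraph) (sp : G.V → G.E) (l : List G.E) :
    (l.map (wE1 G)).Chain' (fun a b => ¬ Forbidden G sp a b) := by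
  rw [List.Chain', List.isChain_map]
  exact chain'_univ (fun a b => by simp [wE1]) l

lemma chainN_map_g1rev (G : WGraph) (sp : G.V → G.E) (l : List G.E) :
    (l.reverse.map (wG1 G)).Chain' (fun a b => ¬ Forbidden G sp a b) := by
  rw [List.Chain', List.isChain_map]
  exact chain'_univ (fun a b => by simp [wG1]) l.reverse

/-- Master construction: glue `e_2`, the path `α`, a middle word `M`, the reverse
of `α` in ghost letters, and `e_2*` into a nod-path. -/
lemma build {G : WGraph} {sp : G.V → G.E} {e : G.E} (he : G.Weighted e)
    {v : G.V} {α : List G.E} (hα : GPath G (G.r e) v α)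
    {M : List (WGen G)} (hMne : M ≠ [])
    (hMnv : ∀ x ∈ M, ¬ IsVertexLetter G x)
    (hMD : M.Chain' (fun a b => grng G a = gsrc G b))
    (hMN : M.Chain' (fun a b => ¬ Forbidden G sp a b))
    (hMh : ∀ x ∈ M.head?, gsrc G x = v)
    (hMl : ∀ x ∈ M.getLast?, grng G x = v)
    (hj1 : ∀ a ∈ α.getLast?, ∀ x ∈ M.head?, ¬ Forbidden G sp (wE1 G a) x)
    (hj2 : ∀ x ∈ M.getLast?, ∀ a ∈ α.getLast?, ¬ Forbidden G sp x (wG1 G a))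
    (hs : ∀ x ∈ M.head?, ¬ Forbidden G sp (WGen.edge e 2 one_le_two he) x)
    (ht : ∀ x ∈ M.getLast?, ¬ Forbidden G sp x (WGen.ghost e 2 one_le_two he)) :
    ∃ p : List (WGen G), IsNod G sp p ∧
      p.head? = some (WGen.edge e 2 one_le_two he) ∧
      p.getLast? = some (WGen.ghost e 2 one_le_two he) := by
  classical
  have hm1 : M.head? = some (M.head hMne) := List.head?_eq_head hMne
  have hm2 : M.getLast? = some (M.getLast hMne) := List.getLast?_eq_getLast hMne
  set m1 := M.head hMne with hm1d
  set m2 := M.getLast hMne with hm2d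
  refine ⟨(WGen.edge e 2 one_le_two he :: (α.map (wE1 G) ++ M ++ α.reverse.map (wG1 G)))
      ++ [WGen.ghost e 2 one_le_two he], ⟨Or.inr ⟨by simp, ?_, ?_⟩, ?_⟩, by simp,
      List.getLast?_concat⟩
  · -- no vertex letters
    intro x hx
    simp only [List.cons_append, List.mem_cons, List.append_assoc, List.mem_append,
      List.mem_map, List.mem_reverse, List.mem_singleton, List.not_mem_nil, or_false] at hx
    rcases hx with rfl | ⟨a, -, rfl⟩ | hx | ⟨a, -, rfl⟩ | rfl
    · exact fun h => h
    · simp [wE1]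
    · exact hMnv x hx
    · simp [wG1]
    · exact fun h => h
  all_goals {
    rcases eq_or_ne α [] with rfl | hαne
    -- α = []
    · have hre : G.r e = v := hα.nil_eq
      simp only [List.map_nil, List.reverse_nil, List.nil_append, List.append_nil]
      refine List.isChain_append.mpr ⟨List.isChain_cons.mpr ⟨?_, ?_⟩, List.isChain_singleton _, ?_⟩
      · rw [hm1]
        rintro y ⟨rfl⟩
        first
        | exact (by simp [hre, hMh m1 hm1] : grng G (WGen.edge e 2 one_le_two he) = gsrc G m1)
        | exact hs m1 hm1
      · first | exact hMD | exact hMN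
      · intro x hx y hy
        rw [show (WGen.edge e 2 one_le_two he :: M) = [WGen.edge e 2 one_le_two he] ++ M
            from rfl, List.getLast?_append, hm2] at hx
        simp only [Option.some_or, Option.mem_def, Option.some.injEq] at hx
        subst hx
        simp only [List.head?_cons, Option.mem_def, Option.some.injEq] at hy
        subst hy
        first
        | exact (by simp [hMl m2 hm2, hre] : grng G m2 = gsrc G (WGen.ghost e 2 one_le_two he))
        | exact ht m2 hm2
    -- α ≠ []
    · have ha0 : α.head? = some (α.head hαne) := List.head?_eq_head hαne
      have haL : α.getLast? = some (α.getLast hαne) := List.getLast?_eq_getLast hαne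
      set a0 := α.head hαne with ha0d
      set aL := α.getLast hαne with haLd
      have hs0 : G.s a0 = G.r e := hα.head?_src a0 ha0
      have hrL : G.r aL = v := hα.getLast?_rng aL haL
      have hA_head : (α.map (wE1 G)).head? = some (wE1 G a0) := by
        rw [List.head?_map, ha0]; rfl
      have hA_last : (α.map (wE1 G)).getLast? = some (wE1 G aL) := by
        rw [List.getLast?_map, haL]; rfl
      have hAg_head : (α.reverse.map (wG1 G)).head? = some (wG1 G aL) := by
        rw [List.head?_map, List.head?_reverse, haL]; rfl
      have hAg_last : (α.reverse.map (wG1 G)).getLast? = some (wG1 G a0) := by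
        rw [List.getLast?_map, List.getLast?_reverse, ha0]; rfl
      refine List.isChain_append.mpr ⟨List.isChain_cons.mpr ⟨?_, ?_⟩,
        List.isChain_singleton _, ?_⟩
      · -- head junction: e_2 to first letter of A ++ M ++ Ag
        intro y hy
        rw [List.append_assoc, List.head?_append, hA_head] at hy
        simp only [Option.some_or, Option.mem_def, Option.some.injEq] at hy
        subst hy
        first
        | exact (by simp [hs0] : grng G (WGen.edge e 2 one_le_two he) = gsrc G (wE1 G a0))
        | simp [wE1]
      · -- chain on A ++ M ++ Ag
        refine List.isChain_append.mpr ⟨List.isChain_append.mpr ⟨?_, ?_, ?_⟩, ?_, ?_⟩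
        · first | exact chainD_map_e1 hα.chain' | exact chainN_map_e1 G sp α
        · first | exact hMD | exact hMN
        · intro x hx y hy
          rw [hA_last] at hx
          simp only [Option.mem_def, Option.some.injEq] at hx
          subst hx
          rw [hm1] at hy
          simp only [Option.mem_def, Option.some.injEq] at hy
          subst hy
          first
          | exact (by simp [hrL, hMh m1 hm1] : grng G (wE1 G aL) = gsrc G m1)
          | exact hj1 aL haL m1 hm1
        · first | exact chainD_map_g1rev hα.chain' | exact chainN_map_g1rev G sp α
        · intro x hx y hy
          rw [List.getLast?_append, hm2] at hx
          simp only [Option.some_or, Option.mem_def, Option.some.injEq] at hx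
          subst hx
          rw [hAg_head] at hy
          simp only [Option.mem_def, Option.some.injEq] at hy
          subst hy
          first
          | exact (by simp [hMl m2 hm2, hrL] : grng G m2 = gsrc G (wG1 G aL))
          | exact hj2 m2 hm2 aL haL
      · -- last junction to e_2*
        intro x hx y hy
        rw [show (WGen.edge e 2 one_le_two he :: (α.map (wE1 G) ++ M ++ α.reverse.map (wG1 G)))
            = [WGen.edge e 2 one_le_two he] ++ (α.map (wE1 G) ++ M ++ α.reverse.map (wG1 G))
            from rfl, List.getLast?_append, List.getLast?_append, hAg_last] at hx
        simp only [Option.some_or, Option.mem_def, Option.some.injEq] at hx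
        subst hx
        simp only [List.head?_cons, Option.mem_def, Option.some.injEq] at hy
        subst hy
        first
        | exact (by simp [hs0] : grng G (wG1 G a0) = gsrc G (WGen.ghost e 2 one_le_two he))
        | simp [wG1]
  }


lemma forall_mem_some {A : Type*} {m : A} {P : A → Prop} (h : P m) :
    ∀ x ∈ (some m : Option A), P x := by
  intro x hx
  simp only [Option.mem_def, Option.some.injEq] at hx
  subst hx; exact h

end Stmt5Aux

/-- If `(E,w)` does not satisfy Condition (LPA), there exist a weighted edge `e`
and a nod-path whose first letter is `e_2` and whose last letter is `e_2*`. -/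
theorem stmt5 (G : WGraph) (sp : G.V → G.E) (hsp : IsSpecialChoice G sp) (h : ¬ G.LPA) :
    ∃ (e : G.E) (he : G.Weighted e) (p : List (WGen G)), IsNod G sp p ∧
      p.head? = some (WGen.edge e 2 one_le_two he) ∧
      p.getLast? = some (WGen.ghost e 2 one_le_two he) := by
  classical
  rw [WGraph.LPA] at h
  simp only [not_and_or] at h
  rcases h with h | h | h | h
  -- Case 1 : (LPA1) fails
  · push_neg at h
    obtain ⟨a, b, ha, hb, hsab, hne⟩ := h
    obtain ⟨x, hx, hspx⟩ : ∃ x, ∃ _ : G.Weighted x, sp (G.s x) ≠ x := by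
      by_cases hspa : sp (G.s a) = a
      · exact ⟨b, hb, fun hh => hne ((hsab ▸ hspa : sp (G.s b) = a).symm.trans hh)⟩
      · exact ⟨a, ha, hspa⟩
    refine ⟨x, hx, [WGen.edge x 2 one_le_two hx, WGen.ghost x 2 one_le_two hx],
      ⟨Or.inr ⟨by simp, ?_, ?_⟩, ?_⟩, by simp, by simp⟩
    · intro z hz
      simp only [List.mem_cons, List.mem_singleton, List.not_mem_nil, or_false] at hz
      rcases hz with rfl | rfl <;> exact fun h => h
    · refine List.isChain_cons.mpr ⟨?_, List.isChain_singleton _⟩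
      simp only [List.head?_cons]
      exact forall_mem_some (by simp)
    · refine List.isChain_cons.mpr ⟨?_, List.isChain_singleton _⟩
      simp only [List.head?_cons]
      exact forall_mem_some (by simp [hspx])
  -- Case 2 : (LPA2) fails
  · push_neg at h
    obtain ⟨v, hgex, x, y, hxv, hyv, hxy⟩ := h
    obtain ⟨g, hg, hgeq⟩ := hgex
    obtain ⟨z, hzv, hspz⟩ : ∃ z, G.s z = v ∧ sp v ≠ z := by
      by_cases hspx : sp v = x
      · exact ⟨y, hyv, fun hh => hxy (hspx.symm.trans hh)⟩
      · exact ⟨x, hxv, hspx⟩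
    obtain ⟨α, hα⟩ := geq_gpath hgeq
    refine ⟨g, hg, ?_⟩
    refine build hg hα (M := [wE1 G z, wG1 G z]) (by simp) ?_ ?_ ?_ ?_ ?_ ?_ ?_ ?_ ?_
    · intro t ht
      simp only [List.mem_cons, List.mem_singleton, List.not_mem_nil, or_false] at ht
      rcases ht with rfl | rfl <;> simp [wE1, wG1]
    · refine List.isChain_cons.mpr ⟨?_, List.isChain_singleton _⟩
      simp only [List.head?_cons]
      exact forall_mem_some (by simp)
    · refine List.isChain_cons.mpr ⟨?_, List.isChain_singleton _⟩
      simp only [List.head?_cons]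
      refine forall_mem_some ?_
      simp only [wE1, wG1, forb_eg]
      rintro ⟨-, hc⟩
      rw [hzv] at hc
      exact hspz hc
    · simp only [List.head?_cons]
      exact forall_mem_some (by simp [hzv])
    · show ∀ t ∈ ([wE1 G z, wG1 G z] : List (WGen G)).getLast?, _
      rw [show ([wE1 G z, wG1 G z] : List (WGen G)) = [wE1 G z] ++ [wG1 G z] from rfl,
        List.getLast?_concat]
      exact forall_mem_some (by simp [hzv])
    · intro a ha
      simp only [List.head?_cons]
      exact forall_mem_some (by simp [wE1])
    · rw [show ([wE1 G z, wG1 G z] : List (WGen G)) = [wE1 G z] ++ [wG1 G z] from rfl,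
        List.getLast?_concat]
      exact forall_mem_some (by intro a ha; simp [wG1])
    · simp only [List.head?_cons]
      exact forall_mem_some (by simp [wE1])
    · rw [show ([wE1 G z, wG1 G z] : List (WGen G)) = [wE1 G z] ++ [wG1 G z] from rfl,
        List.getLast?_concat]
      exact forall_mem_some (by simp [wG1])
  -- Case 3 : (LPA3) fails
  · push_neg at h
    obtain ⟨e, f, he, hf, hnl, v, hge, hgf⟩ := h
    have hef : e ≠ f := fun hh => hnl (Or.inl hh)
    have hnl1 : ∀ b, G.Geq (G.r e) (G.s b) → b ≠ f :=
      fun b hb hbf => hnl (Or.inr (Or.inl (hbf ▸ hb)))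
    have hnl2 : ∀ b, G.Geq (G.r f) (G.s b) → b ≠ e :=
      fun b hb hbe => hnl (Or.inr (Or.inr (hbe ▸ hb)))
    obtain ⟨α, hα⟩ := geq_gpath hge
    obtain ⟨β, hβ⟩ := geq_gpath hgf
    obtain ⟨v', α', β', hα', hβ', hlast⟩ := trunc3 α.length α β v le_rfl hα hβ
    refine ⟨e, he, ?_⟩
    rcases eq_or_ne β' [] with rfl | hβne
    -- β' = []
    · have hrf : G.r f = v' := hβ'.nil_eq
      refine build he hα'
        (M := [WGen.ghost f 2 one_le_two hf, WGen.edge f 2 one_le_two hf])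
        (by simp) ?_ ?_ ?_ ?_ ?_ ?_ ?_ ?_ ?_
      · intro t ht
        simp only [List.mem_cons, List.mem_singleton, List.not_mem_nil, or_false] at ht
        rcases ht with rfl | rfl <;> exact fun h => h
      · refine List.isChain_cons.mpr ⟨?_, List.isChain_singleton _⟩
        simp only [List.head?_cons]
        exact forall_mem_some (by simp)
      · refine List.isChain_cons.mpr ⟨?_, List.isChain_singleton _⟩
        simp only [List.head?_cons]
        exact forall_mem_some (by simp)
      · simp only [List.head?_cons]
        exact forall_mem_some (by simp [hrf])
      · rw [show ([WGen.ghost f 2 one_le_two hf, WGen.edge f 2 one_le_two hf] : List (WGen G))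
          = [WGen.ghost f 2 one_le_two hf] ++ [WGen.edge f 2 one_le_two hf] from rfl,
          List.getLast?_concat]
        exact forall_mem_some (by simp [hrf])
      · intro a ha
        simp only [List.head?_cons]
        refine forall_mem_some ?_
        have hne' : a ≠ f := hnl1 a (hα'.mem_geq a (List.mem_of_mem_getLast? ha))
        simp [wE1, hne']
      · rw [show ([WGen.ghost f 2 one_le_two hf, WGen.edge f 2 one_le_two hf] : List (WGen G))
          = [WGen.ghost f 2 one_le_two hf] ++ [WGen.edge f 2 one_le_two hf] from rfl,
          List.getLast?_concat]
        refine forall_mem_some ?_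
        intro a ha
        have hne' : a ≠ f := hnl1 a (hα'.mem_geq a (List.mem_of_mem_getLast? ha))
        simp only [wG1, forb_eg]
        rintro ⟨rfl, -⟩
        exact hne' rfl
      · simp only [List.head?_cons]
        exact forall_mem_some (by simp [hef])
      · rw [show ([WGen.ghost f 2 one_le_two hf, WGen.edge f 2 one_le_two hf] : List (WGen G))
          = [WGen.ghost f 2 one_le_two hf] ++ [WGen.edge f 2 one_le_two hf] from rfl,
          List.getLast?_concat]
        exact forall_mem_some (by simp [Ne.symm hef])
    -- β' ≠ []
    · have hb0 : β'.head? = some (β'.head hβne) := List.head?_eq_head hβne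
      have hbL : β'.getLast? = some (β'.getLast hβne) := List.getLast?_eq_getLast hβne
      set b0 := β'.head hβne with hb0d
      set bL := β'.getLast hβne with hbLd
      have hs0 : G.s b0 = G.r f := hβ'.head?_src b0 hb0
      have hrL : G.r bL = v' := hβ'.getLast?_rng bL hbL
      have hbLe : bL ≠ e :=
        hnl2 bL (hβ'.mem_geq bL (List.mem_of_mem_getLast? (by rw [hbL]; rfl)))
      have hMh : (β'.reverse.map (wG1 G) ++ ([WGen.ghost f 2 one_le_two hf,
          WGen.edge f 2 one_le_two hf] ++ β'.map (wE1 G))).head? = some (wG1 G bL) := by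
        rw [List.head?_append, List.head?_map, List.head?_reverse, hbL]; rfl
      have hMl : (β'.reverse.map (wG1 G) ++ ([WGen.ghost f 2 one_le_two hf,
          WGen.edge f 2 one_le_two hf] ++ β'.map (wE1 G))).getLast? = some (wE1 G bL) := by
        rw [List.getLast?_append, List.getLast?_append, List.getLast?_map, hbL]; rfl
      refine build he hα'
        (M := β'.reverse.map (wG1 G) ++ ([WGen.ghost f 2 one_le_two hf,
          WGen.edge f 2 one_le_two hf] ++ β'.map (wE1 G)))
        (by simp) ?_ ?_ ?_ ?_ ?_ ?_ ?_ ?_ ?_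
      · intro t ht
        simp only [List.mem_append, List.mem_cons, List.mem_map, List.mem_reverse,
          List.mem_singleton, List.not_mem_nil, or_false] at ht
        rcases ht with ⟨b, -, rfl⟩ | (rfl | rfl) | ⟨b, -, rfl⟩ <;> simp [wE1, wG1]
      · -- D chain
        refine List.isChain_append.mpr ⟨chainD_map_g1rev hβ'.chain', ?_, ?_⟩
        · simp only [List.cons_append, List.nil_append]
          refine List.isChain_cons.mpr ⟨?_, List.isChain_cons.mpr ⟨?_, chainD_map_e1 hβ'.chain'⟩⟩
          · simp only [List.head?_cons]
            exact forall_mem_some (by simp)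
          · rw [List.head?_map, hb0]
            exact forall_mem_some (by simp [hs0])
        · intro x hx y hy
          rw [List.getLast?_map, List.getLast?_reverse, hb0] at hx
          simp only [Option.map_some, Option.mem_def, Option.some.injEq] at hx
          subst hx
          simp only [List.cons_append, List.nil_append, List.head?_cons, Option.mem_def,
            Option.some.injEq] at hy
          subst hy
          simp [hs0]
      · -- N chain
        refine List.isChain_append.mpr ⟨chainN_map_g1rev G sp β', ?_, ?_⟩
        · simp only [List.cons_append, List.nil_append]
          refine List.isChain_cons.mpr ⟨?_, List.isChain_cons.mpr ⟨?_, chainN_map_e1 G sp β'⟩⟩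
          · simp only [List.head?_cons]
            exact forall_mem_some (by simp)
          · rw [List.head?_map, hb0]
            exact forall_mem_some (by simp [wE1])
        · intro x hx y hy
          rw [List.getLast?_map, List.getLast?_reverse, hb0] at hx
          simp only [Option.map_some, Option.mem_def, Option.some.injEq] at hx
          subst hx
          simp only [List.cons_append, List.nil_append, List.head?_cons, Option.mem_def,
            Option.some.injEq] at hy
          subst hy
          simp [wG1]
      · rw [hMh]
        exact forall_mem_some (by simp [hrL])
      · rw [hMl]
        exact forall_mem_some (by simp [hrL])
      · intro a ha
        rw [hMh]
        refine forall_mem_some ?_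
        simp only [wE1, wG1, forb_eg]
        rintro ⟨h', -⟩
        exact hlast a ha bL hbL h' 
      · rw [hMl]
        refine forall_mem_some ?_
        intro a ha
        simp only [wE1, wG1, forb_eg]
        rintro ⟨h', -⟩
        exact hlast a ha bL hbL h'.symm
      · rw [hMh]
        exact forall_mem_some (by simp [wG1, Ne.symm hbLe])
      · rw [hMl]
        exact forall_mem_some (by simp [wE1, hbLe])
  -- Case 4 : (LPA4) fails
  · push_neg at h
    obtain ⟨e, he, v, hgeq, c, hc, hec⟩ := h
    obtain ⟨α, hα⟩ := geq_gpath hgeq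
    obtain ⟨v', α', c', hα', hc', hec', hlast⟩ :=
      trunc4 α.length α c v le_rfl hα (GCyc.of_isCycleAt hc) hec
    obtain ⟨hcne, hcch, hch, hcl⟩ := hc'
    have hc0 : c'.head? = some (c'.head hcne) := List.head?_eq_head hcne
    have hcL : c'.getLast? = some (c'.getLast hcne) := List.getLast?_eq_getLast hcne
    set c0 := c'.head hcne with hc0d
    set cL := c'.getLast hcne with hcLd
    have hcLe : cL ≠ e := fun hh => hec' (hh ▸ List.mem_of_mem_getLast? (by rw [hcL]; rfl))
    have hMh : (c'.map (wE1 G)).head? = some (wE1 G c0) := by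
      rw [List.head?_map, hc0]; rfl
    have hMl : (c'.map (wE1 G)).getLast? = some (wE1 G cL) := by
      rw [List.getLast?_map, hcL]; rfl
    refine ⟨e, he, ?_⟩
    refine build he hα' (M := c'.map (wE1 G)) (by simp [hcne]) ?_ ?_ ?_ ?_ ?_ ?_ ?_ ?_ ?_
    · intro t ht
      simp only [List.mem_map] at ht
      obtain ⟨b, -, rfl⟩ := ht
      simp [wE1]
    · exact chainD_map_e1 hcch
    · exact chainN_map_e1 G sp c'
    · rw [hMh]
      exact forall_mem_some (by simp [hch c0 hc0])
    · rw [hMl]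
      exact forall_mem_some (by simp [hcl cL hcL])
    · intro a ha
      rw [hMh]
      exact forall_mem_some (by simp [wE1])
    · rw [hMl]
      refine forall_mem_some ?_
      intro a ha
      simp only [wE1, wG1, forb_eg]
      rintro ⟨h', -⟩
      exact hlast a ha cL hcL h'.symm
    · rw [hMh]
      exact forall_mem_some (by simp [wE1])
    · rw [hMl]
      exact forall_mem_some (by simp [wE1, hcLe])
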